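/- Let p : V \ {r} → V be a parent function on a finite vertex set whose functional graph is a spanning tree rooted at r, and let level : V → ℕ satisfy level(r) = 0 and level(p(v)) + 1 ≤ level(v). If v changes its parent to a neighbor u with level(u) + 1 ≤ level(v), then u is not a descendant of v, and hence the new parent function still defines a spanning tree rooted at r. -/

import Mathlib

/-- If the parent function `p` forms a spanning tree rooted at `r`, with a
level function satisfying `level r = 0` and `level (p v) + 1 ≤ level v` for
`v ≠ r`, and a vertex `v ≠ r` changes its parent to a neighbor `u` with
`level u + 1 ≤ level v`, then `u` is not a descendant of `v`, and hence the
new parent function still defines a spanning tree rooted at `r`. -/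
theorem safe_parent_change {V : Type*} [Fintype V] [DecidableEq V]
    (G : SimpleGraph V) (r : V) (p : V → V) (level : V → ℕ)
    (hpr : p r = r) (hr0 : level r = 0)
    (hlev : ∀ x, x ≠ r → level (p x) + 1 ≤ level x)
    (htree : ∀ x, ∃ k : ℕ, p^[k] x = r)
    (v u : V) (hvr : v ≠ r) (hadj : G.Adj v u)
    (hle : level u + 1 ≤ level v) :
    (¬ ∃ k : ℕ, p^[k] u = v) ∧
    ∀ x, ∃ k : ℕ, (Function.update p v u)^[k] x = r := by
  have hmono : ∀ y, level (p y) ≤ level y := by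
    intro y
    by_cases hy : y = r
    · subst hy; rw [hpr]
    · exact le_of_lt (Nat.lt_of_succ_le (hlev y hy))
  have hiter : ∀ k y, level (p^[k] y) ≤ level y := by
    intro k
    induction k with
    | zero => intro y; simp
    | succ n ih =>
      intro y
      rw [Function.iterate_succ_apply]
      exact (ih (p y)).trans (hmono y)
  constructor
  · rintro ⟨k, hk⟩
    have := hiter k u
    rw [hk] at this
    omega
  · intro x
    set q := Function.update p v u with hq
    have hqr : q r = r := by
      rw [hq, Function.update_of_ne (Ne.symm hvr), hpr]
    have hqlev : ∀ y, y ≠ r → level (q y) + 1 ≤ level y := by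
      intro y hy
      by_cases hyv : y = v
      · subst hyv
        rw [hq, Function.update_self]
        exact hle
      · rw [hq, Function.update_of_ne hyv]
        exact hlev y hy
    suffices h : ∀ n y, level y ≤ n → ∃ k, q^[k] y = r from h (level x) x le_rfl
    intro n
    induction n with
    | zero =>
      intro y hy
      by_cases hx : y = r
      · exact ⟨0, hx⟩
      · have := hqlev y hx; omega
    | succ n ih =>
      intro y hy
      by_cases hx : y = r
      · exact ⟨0, hx⟩
      · obtain ⟨k, hk⟩ := ih (q y) (by have := hqlev y hx; omega)
        exact ⟨k + 1, by rwa [Function.iterate_succ_apply]⟩
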